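/- arXiv:1607.00571 — 2 statements merged into one kernel-verified Lean document; each statement's English description precedes it below -/
import Mathlib

section
/- For r+k > 0, the space of homogeneous polynomial k-forms decomposes as a direct sum H_rΛ^k(ℝ^n) = κH_{r−1}Λ^{k+1}(ℝ^n) ⊕ dH_{r+1}Λ^{k−1}(ℝ^n). -/
open MvPolynomial

/-- Polynomial differential forms on `ℝ^n`: a family of polynomial coefficients indexed by
subsets `σ ⊆ {1,…,n}`; a `k`-form is supported on sets of cardinality `k`. -/
abbrev PolyForm (n : ℕ) := Finset (Fin n) → MvPolynomial (Fin n) ℝ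

/-- The sign `(-1)^{#{j ∈ σ : j < i}}`. -/
noncomputable def sgn {n : ℕ} (σ : Finset (Fin n)) (i : Fin n) : MvPolynomial (Fin n) ℝ :=
  (-1) ^ (σ.filter (fun j => j < i)).card

/-- The exterior derivative `d`. -/
noncomputable def extD (n : ℕ) : PolyForm n →ₗ[ℝ] PolyForm n where
  toFun ω := fun σ => ∑ i ∈ σ, sgn σ i * pderiv i (ω (σ.erase i))
  map_add' ω η := by
    funext σ
    simp [Pi.add_apply, mul_add, Finset.sum_add_distrib]
  map_smul' c ω := by
    funext σ
    simp [Pi.smul_apply, Finset.smul_sum, mul_smul_comm]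

/-- The Koszul operator `κ` (contraction with the position vector field). -/
noncomputable def koszul (n : ℕ) : PolyForm n →ₗ[ℝ] PolyForm n where
  toFun ω := fun σ => ∑ i ∈ σᶜ, sgn σ i * X i * ω (insert i σ)
  map_add' ω η := by
    funext σ
    simp [Pi.add_apply, mul_add, Finset.sum_add_distrib]
  map_smul' c ω := by
    funext σ
    simp [Pi.smul_apply, Finset.smul_sum, mul_smul_comm]

/-- The space of (polynomial) differential `k`-forms: families supported on index sets of
cardinality `k`. -/
noncomputable def Lambda (n k : ℕ) : Submodule ℝ (PolyForm n) where
  carrier := {ω | ∀ σ, σ.card ≠ k → ω σ = 0}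
  zero_mem' := fun σ _ => rfl
  add_mem' := fun ha hb σ h => by simp only [Pi.add_apply, ha σ h, hb σ h, add_zero]
  smul_mem' := fun c ω h σ hσ => by simp only [Pi.smul_apply, h σ hσ, smul_zero]

/-- The form monomial `x^α dx_σ`. -/
noncomputable def formMonomial {n : ℕ} (α : Fin n →₀ ℕ) (σ : Finset (Fin n)) : PolyForm n :=
  fun τ => if τ = σ then monomial α 1 else 0

/-- The (total) degree `|α|` of a multi-index. -/
def mdeg {n : ℕ} (α : Fin n →₀ ℕ) : ℕ := α.sum fun _ m => m

/-- The linear degree of the form monomial `x^α dx_σ`: the number of `i ∉ σ` with `α i = 1`. -/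
def ldeg {n : ℕ} (α : Fin n →₀ ℕ) (σ : Finset (Fin n)) : ℕ :=
  ((σᶜ).filter fun i => α i = 1).card

/-- `H_rΛ^k(ℝ^n)`: `k`-forms with homogeneous degree-`r` polynomial coefficients. -/
noncomputable def Hspace (n r k : ℕ) : Submodule ℝ (PolyForm n) :=
  Submodule.span ℝ {ω | ∃ α σ, σ.card = k ∧ mdeg α = r ∧ ω = formMonomial α σ}

/-- `P_rΛ^k(ℝ^n)`: `k`-forms with polynomial coefficients of degree at most `r`. -/
noncomputable def Pspace (n r k : ℕ) : Submodule ℝ (PolyForm n) :=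
  Submodule.span ℝ {ω | ∃ α σ, σ.card = k ∧ mdeg α ≤ r ∧ ω = formMonomial α σ}

/-- `H_{r,l}Λ^k(ℝ^n)`: homogeneous degree-`r` `k`-forms of linear degree at least `l`. -/
noncomputable def Hl (n r l k : ℕ) : Submodule ℝ (PolyForm n) :=
  Submodule.span ℝ
    {ω | ∃ α σ, σ.card = k ∧ mdeg α = r ∧ l ≤ ldeg α σ ∧ ω = formMonomial α σ}

/-- `J_rΛ^k(ℝ^n) := Σ_{l ≥ 1} κ H_{r+l-1, l}Λ^{k+1}(ℝ^n)` (here `l` is reindexed as `l+1`). -/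
noncomputable def Jspace (n r k : ℕ) : Submodule ℝ (PolyForm n) :=
  ⨆ l : ℕ, Submodule.map (koszul n) (Hl n (r + l) (l + 1) (k + 1))

/-- The trimmed polynomial space `P_r^-Λ^k := P_{r-1}Λ^k ⊕ κ H_{r-1}Λ^{k+1}`. -/
noncomputable def PminusSpace (n r k : ℕ) : Submodule ℝ (PolyForm n) :=
  Pspace n (r - 1) k ⊔ Submodule.map (koszul n) (Hspace n (r - 1) (k + 1))

/-- The serendipity space `S_rΛ^k := P_rΛ^k + J_rΛ^k + d J_{r+1}Λ^{k-1}`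
(the last summand being absent for `k = 0`). -/
noncomputable def Sspace (n r k : ℕ) : Submodule ℝ (PolyForm n) :=
  Pspace n r k ⊔ Jspace n r k ⊔
    (if k = 0 then ⊥ else Submodule.map (extD n) (Jspace n (r + 1) (k - 1)))

/-- The trimmed serendipity space `S_r^-Λ^k := S_{r-1}Λ^k + κ S_{r-1}Λ^{k+1}`. -/
noncomputable def SminusSpace (n r k : ℕ) : Submodule ℝ (PolyForm n) :=
  Sspace n (r - 1) k ⊔ Submodule.map (koszul n) (Sspace n (r - 1) (k + 1))

open Finset MvPolynomial

variable {n : ℕ}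

theorem sgn_insert {s : Finset (Fin n)} {i : Fin n} (j : Fin n) (h : i ∉ s) :
    sgn (insert i s) j = (if i < j then -1 else 1) * sgn s j := by
  unfold sgn
  rw [Finset.filter_insert]
  split_ifs with h1
  · rw [Finset.card_insert_of_notMem (by simp [h]), pow_succ, mul_comm]
  · rw [one_mul]

theorem sgn_insert_self (s : Finset (Fin n)) (i : Fin n) : sgn (insert i s) i = sgn s i := by
  unfold sgn
  rw [Finset.filter_insert, if_neg (lt_irrefl i)]

theorem sgn_erase_self (s : Finset (Fin n)) (i : Fin n) : sgn (s.erase i) i = sgn s i := by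
  unfold sgn
  rw [Finset.filter_erase, Finset.erase_eq_of_notMem (by simp)]

theorem sgn_sq (s : Finset (Fin n)) (i : Fin n) : sgn s i * sgn s i = 1 := by
  unfold sgn
  rw [← pow_add]
  exact Even.neg_one_pow ⟨_, rfl⟩

theorem sgn_C (s : Finset (Fin n)) (i : Fin n) :
    sgn s i = C ((-1 : ℝ) ^ (s.filter (fun j => j < i)).card) := by
  unfold sgn; rw [map_pow, map_neg, map_one]

theorem pderiv_sgn_mul (s : Finset (Fin n)) (i j : Fin n) (p : MvPolynomial (Fin n) ℝ) :
    pderiv j (sgn s i * p) = sgn s i * pderiv j p := by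
  rw [sgn_C, pderiv_C_mul]

theorem sgn_of_erase {τ : Finset (Fin n)} {i : Fin n} (j : Fin n) (hi : i ∈ τ) :
    sgn τ j = (if i < j then -1 else 1) * sgn (τ.erase i) j := by
  conv_lhs => rw [← Finset.insert_erase hi]
  rw [sgn_insert j (Finset.notMem_erase i τ)]

/-- mixed cancellation: `i ∈ τ`, `j ∉ τ`. -/
theorem sgn_cancel_dk {τ : Finset (Fin n)} {i j : Fin n} (hi : i ∈ τ) (hj : j ∉ τ) :
    sgn τ i * sgn (τ.erase i) j + sgn τ j * sgn (insert j τ) i = 0 := by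
  have hij : i ≠ j := fun h => hj (h ▸ hi)
  rw [sgn_insert i hj, sgn_of_erase j hi]
  rcases lt_or_gt_of_ne hij with h | h
  · rw [if_pos h, if_neg (not_lt.2 h.le)]; ring
  · rw [if_neg (not_lt.2 h.le), if_pos h]; ring

/-- both outside: `i ∉ τ`, `j ∉ τ`, `i ≠ j`. -/
theorem sgn_cancel_kk {τ : Finset (Fin n)} {i j : Fin n} (hi : i ∉ τ) (hj : j ∉ τ) (hij : i ≠ j) :
    sgn τ i * sgn (insert i τ) j + sgn τ j * sgn (insert j τ) i = 0 := by
  rw [sgn_insert j hi, sgn_insert i hj]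
  rcases lt_or_gt_of_ne hij with h | h
  · rw [if_pos h, if_neg (not_lt.2 h.le)]; ring
  · rw [if_neg (not_lt.2 h.le), if_pos h]; ring

/-- both inside: `i ∈ τ`, `j ∈ τ`, `i ≠ j`. -/
theorem sgn_cancel_dd {τ : Finset (Fin n)} {i j : Fin n} (hi : i ∈ τ) (hj : j ∈ τ) (hij : i ≠ j) :
    sgn τ i * sgn (τ.erase i) j + sgn τ j * sgn (τ.erase j) i = 0 := by
  rw [sgn_of_erase (i := j) i hj, sgn_of_erase (i := i) j hi]
  rcases lt_or_gt_of_ne hij with h | h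
  · rw [if_pos h, if_neg (not_lt.2 h.le)]; ring
  · rw [if_neg (not_lt.2 h.le), if_pos h]; ring

theorem extD_apply (n : ℕ) (ω : PolyForm n) (τ : Finset (Fin n)) :
    extD n ω τ = ∑ i ∈ τ, sgn τ i * pderiv i (ω (τ.erase i)) := rfl

theorem koszul_apply (n : ℕ) (ω : PolyForm n) (τ : Finset (Fin n)) :
    koszul n ω τ = ∑ i ∈ τᶜ, sgn τ i * X i * ω (insert i τ) := rfl

theorem homotopy_pointwise (n : ℕ) (ω : PolyForm n) (τ : Finset (Fin n)) :
    extD n (koszul n ω) τ + koszul n (extD n ω) τ =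
      τ.card • ω τ + ∑ i : Fin n, X i * pderiv i (ω τ) := by
  have hDk : ∀ i ∈ τ, sgn τ i * pderiv i (koszul n ω (τ.erase i)) =
      (ω τ + X i * pderiv i (ω τ)) +
        ∑ j ∈ τᶜ, (sgn τ i * sgn (τ.erase i) j) *
          (X j * pderiv i (ω (insert j (τ.erase i)))) := by
    intro i hi
    rw [koszul_apply, Finset.compl_erase,
      Finset.sum_insert (by simp [Finset.mem_compl, hi]), Finset.insert_erase hi,
      sgn_erase_self, map_add, mul_add]
    congr 1
    · rw [mul_assoc, pderiv_sgn_mul, pderiv_mul, pderiv_X_self, ← mul_assoc, sgn_sq, one_mul,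
        one_mul]
    · rw [map_sum, Finset.mul_sum]
      refine Finset.sum_congr rfl fun j hj => ?_
      have hij : j ≠ i := by
        rintro rfl; exact (Finset.mem_compl.1 hj) hi
      rw [mul_assoc (sgn (τ.erase i) j), pderiv_sgn_mul, pderiv_mul, pderiv_X_of_ne hij,
        zero_mul, zero_add]
      ring
  have hKd : ∀ i ∈ τᶜ, sgn τ i * X i * extD n ω (insert i τ) =
      X i * pderiv i (ω τ) +
        ∑ j ∈ τ, (sgn τ i * sgn (insert i τ) j) *
          (X i * pderiv j (ω (insert i (τ.erase j)))) := by
    intro i hi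
    have hi' : i ∉ τ := Finset.mem_compl.1 hi
    rw [extD_apply, Finset.sum_insert hi', Finset.erase_insert hi', sgn_insert_self, mul_add]
    congr 1
    · rw [show sgn τ i * X i * (sgn τ i * pderiv i (ω τ)) =
          (sgn τ i * sgn τ i) * (X i * pderiv i (ω τ)) from by ring, sgn_sq, one_mul]
    · rw [Finset.mul_sum]
      refine Finset.sum_congr rfl fun j hj => ?_
      have hij : i ≠ j := by rintro rfl; exact hi' hj
      rw [Finset.erase_insert_of_ne hij]
      ring
  rw [extD_apply, koszul_apply, Finset.sum_congr rfl hDk, Finset.sum_congr rfl hKd,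
    Finset.sum_add_distrib, Finset.sum_add_distrib, Finset.sum_add_distrib]
  have hS : (∑ i ∈ τ, ∑ j ∈ τᶜ, (sgn τ i * sgn (τ.erase i) j) *
        (X j * pderiv i (ω (insert j (τ.erase i))))) +
      (∑ i ∈ τᶜ, ∑ j ∈ τ, (sgn τ i * sgn (insert i τ) j) *
        (X i * pderiv j (ω (insert i (τ.erase j))))) = 0 := by
    rw [Finset.sum_comm (s := τᶜ), ← Finset.sum_add_distrib]
    refine Finset.sum_eq_zero fun i hi => ?_
    rw [← Finset.sum_add_distrib]
    refine Finset.sum_eq_zero fun j hj => ?_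
    rw [← add_mul]
    rw [sgn_cancel_dk hi (Finset.mem_compl.1 hj), zero_mul]
  have hsplit : (∑ i ∈ τ, X i * pderiv i (ω τ)) + ∑ i ∈ τᶜ, X i * pderiv i (ω τ) =
      ∑ i : Fin n, X i * pderiv i (ω τ) := Finset.sum_add_sum_compl τ _
  calc _ = ((∑ _i ∈ τ, ω τ) + ((∑ i ∈ τ, X i * pderiv i (ω τ)) +
            ∑ i ∈ τᶜ, X i * pderiv i (ω τ))) +
          ((∑ i ∈ τ, ∑ j ∈ τᶜ, (sgn τ i * sgn (τ.erase i) j) *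
              (X j * pderiv i (ω (insert j (τ.erase i))))) +
            (∑ i ∈ τᶜ, ∑ j ∈ τ, (sgn τ i * sgn (insert i τ) j) *
              (X i * pderiv j (ω (insert i (τ.erase j)))))) := by ring
    _ = _ := by rw [hS, add_zero, hsplit, Finset.sum_const]

theorem pderiv_pderiv_comm {n : ℕ} (i j : Fin n) (p : MvPolynomial (Fin n) ℝ) :
    pderiv i (pderiv j p) = pderiv j (pderiv i p) := by
  induction p using MvPolynomial.induction_on with
  | C a => simp [pderiv_C]
  | add p q hp hq => simp [map_add, hp, hq]
  | mul_X p k hp =>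
      simp only [pderiv_mul, pderiv_X, map_add, hp, Pi.single_apply,
        apply_ite (pderiv i), apply_ite (pderiv j), pderiv_one, map_zero]
      split_ifs <;> ring

theorem extD_extD (n : ℕ) (ω : PolyForm n) : extD n (extD n ω) = 0 := by
  funext τ
  have key : ∀ i ∈ τ, sgn τ i * pderiv i (extD n ω (τ.erase i)) =
      ∑ j ∈ τ.erase i, (sgn τ i * sgn (τ.erase i) j) *
        pderiv i (pderiv j (ω ((τ.erase i).erase j))) := by
    intro i hi
    rw [extD_apply, map_sum, Finset.mul_sum]
    refine Finset.sum_congr rfl fun j hj => ?_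
    rw [pderiv_sgn_mul]
    ring
  have hsymm : ∀ (x y : Fin n), x ∈ τ ∧ y ∈ τ.erase x ↔ x ∈ τ.erase y ∧ y ∈ τ := by
    intro x y
    simp only [Finset.mem_erase]
    constructor
    · rintro ⟨hx, hyx, hy⟩; exact ⟨⟨fun h => hyx h.symm, hx⟩, hy⟩
    · rintro ⟨⟨hxy, hx⟩, hy⟩; exact ⟨hx, fun h => hxy h.symm, hy⟩
  have hT : extD n (extD n ω) τ = ∑ i ∈ τ, ∑ j ∈ τ.erase i,
      (sgn τ i * sgn (τ.erase i) j) * pderiv i (pderiv j (ω ((τ.erase i).erase j))) := by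
    rw [extD_apply]; exact Finset.sum_congr rfl key
  have h2 : extD n (extD n ω) τ + extD n (extD n ω) τ = 0 := by
    rw [hT]
    nth_rewrite 2 [Finset.sum_comm' hsymm]
    rw [← Finset.sum_add_distrib]
    refine Finset.sum_eq_zero fun i hi => ?_
    rw [← Finset.sum_add_distrib]
    refine Finset.sum_eq_zero fun j hj => ?_
    have hj' : j ∈ τ := Finset.mem_of_mem_erase hj
    have hij : i ≠ j := fun h => (Finset.notMem_erase i τ) (h ▸ hj)
    rw [Finset.erase_right_comm (a := j) (b := i), pderiv_pderiv_comm j i, ← add_mul,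
      sgn_cancel_dd hi hj' hij, zero_mul]
  have := add_self_eq_zero.1 h2
  simpa using this

theorem koszul_koszul (n : ℕ) (ω : PolyForm n) : koszul n (koszul n ω) = 0 := by
  funext τ
  have key : ∀ i ∈ τᶜ, sgn τ i * X i * koszul n ω (insert i τ) =
      ∑ j ∈ τᶜ.erase i, (sgn τ i * sgn (insert i τ) j) *
        (X i * (X j * ω (insert j (insert i τ)))) := by
    intro i hi
    rw [koszul_apply, Finset.compl_insert, Finset.mul_sum]
    refine Finset.sum_congr rfl fun j hj => ?_
    ring
  have hsymm : ∀ (x y : Fin n), x ∈ τᶜ ∧ y ∈ τᶜ.erase x ↔ x ∈ τᶜ.erase y ∧ y ∈ τᶜ := by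
    intro x y
    simp only [Finset.mem_erase]
    constructor
    · rintro ⟨hx, hyx, hy⟩; exact ⟨⟨fun h => hyx h.symm, hx⟩, hy⟩
    · rintro ⟨⟨hxy, hx⟩, hy⟩; exact ⟨hx, fun h => hxy h.symm, hy⟩
  have hT : koszul n (koszul n ω) τ = ∑ i ∈ τᶜ, ∑ j ∈ τᶜ.erase i,
      (sgn τ i * sgn (insert i τ) j) * (X i * (X j * ω (insert j (insert i τ)))) := by
    rw [koszul_apply]; exact Finset.sum_congr rfl key
  have h2 : koszul n (koszul n ω) τ + koszul n (koszul n ω) τ = 0 := by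
    rw [hT]
    nth_rewrite 2 [Finset.sum_comm' hsymm]
    rw [← Finset.sum_add_distrib]
    refine Finset.sum_eq_zero fun i hi => ?_
    rw [← Finset.sum_add_distrib]
    refine Finset.sum_eq_zero fun j hj => ?_
    have hj' : j ∈ τᶜ := Finset.mem_of_mem_erase hj
    have hij : i ≠ j := fun h => (Finset.notMem_erase i τᶜ) (h ▸ hj)
    rw [Finset.insert_comm j i]
    rw [show (sgn τ j * sgn (insert j τ) i) * (X j * (X i * ω (insert i (insert j τ)))) =
      (sgn τ j * sgn (insert j τ) i) * (X i * (X j * ω (insert i (insert j τ)))) from by ring]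
    rw [← add_mul, sgn_cancel_kk (Finset.mem_compl.1 hi) (Finset.mem_compl.1 hj') hij, zero_mul]
  have := add_self_eq_zero.1 h2
  simpa using this

theorem mdeg_eq_sum {n : ℕ} (α : Fin n →₀ ℕ) : mdeg α = ∑ i : Fin n, α i :=
  Finsupp.sum_fintype _ _ fun _ => rfl

theorem mdeg_add_single {n : ℕ} (α : Fin n →₀ ℕ) (i : Fin n) :
    mdeg (α + Finsupp.single i 1) = mdeg α + 1 := by
  simp only [mdeg_eq_sum, Finsupp.add_apply, Finset.sum_add_distrib, Finsupp.single_apply]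
  congr 1
  simp

theorem sub_add_single {n : ℕ} {α : Fin n →₀ ℕ} {i : Fin n} (h : α i ≠ 0) :
    α - Finsupp.single i 1 + Finsupp.single i 1 = α := by
  ext j
  simp only [Finsupp.add_apply, Finsupp.tsub_apply, Finsupp.single_apply]
  by_cases hj : i = j
  · subst hj; simp; omega
  · simp [hj]

theorem sum_ite_univ {n : ℕ} {M : Type*} [AddCommMonoid M] (s : Finset (Fin n))
    (P : Fin n → Prop) [DecidablePred P] (f : Fin n → M) :
    ∑ i ∈ s, (if P i then f i else 0) = ∑ i : Fin n, if i ∈ s ∧ P i then f i else 0 := by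
  have : ∀ i : Fin n, (if i ∈ s ∧ P i then f i else 0) =
      (if i ∈ s then (if P i then f i else 0) else 0) := by
    intro i; by_cases h1 : i ∈ s <;> by_cases h2 : P i <;> simp [h1, h2]
  rw [Finset.sum_congr rfl fun i _ => this i, Finset.sum_ite_mem, Finset.univ_inter]

theorem euler_monomial {n : ℕ} (α : Fin n →₀ ℕ) :
    ∑ i : Fin n, X i * pderiv i (monomial α (1 : ℝ)) = mdeg α • monomial α 1 := by
  have key : ∀ i : Fin n, X i * pderiv i (monomial α (1 : ℝ)) = α i • monomial α 1 := by
    intro i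
    rw [pderiv_monomial, one_mul]
    by_cases h : α i = 0
    · simp [h]
    · rw [show (X i : MvPolynomial (Fin n) ℝ) * monomial (α - Finsupp.single i 1) (α i : ℝ) =
          X i ^ 1 * monomial (α - Finsupp.single i 1) (α i : ℝ) from by rw [pow_one],
        ← monomial_single_add, add_comm, sub_add_single h]
      rw [← Nat.smul_one_eq_cast, ← smul_monomial]
  rw [Finset.sum_congr rfl fun i _ => key i, ← Finset.sum_smul, ← mdeg_eq_sum]

theorem koszul_formMonomial {n : ℕ} (α : Fin n →₀ ℕ) (σ : Finset (Fin n)) :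
    koszul n (formMonomial α σ) = ∑ i ∈ σ,
      ((-1 : ℝ) ^ (σ.filter (fun j => j < i)).card) •
        formMonomial (α + Finsupp.single i 1) (σ.erase i) := by
  funext τ
  rw [koszul_apply, Finset.sum_apply]
  have lhs_eq : ∀ i ∈ τᶜ, sgn τ i * X i * formMonomial α σ (insert i τ) =
      if insert i τ = σ then sgn τ i * X i * monomial α 1 else 0 := by
    intro i _; unfold formMonomial
    split_ifs <;> simp
  have rhs_eq : ∀ i ∈ σ,
      (((-1 : ℝ) ^ (σ.filter (fun j => j < i)).card) •
        formMonomial (α + Finsupp.single i 1) (σ.erase i)) τ =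
      if τ = σ.erase i then
        ((-1 : ℝ) ^ (σ.filter (fun j => j < i)).card) • monomial (α + Finsupp.single i 1) 1
      else 0 := by
    intro i _
    rw [Pi.smul_apply]; unfold formMonomial
    split_ifs <;> simp
  rw [Finset.sum_congr rfl lhs_eq, Finset.sum_congr rfl rhs_eq, sum_ite_univ τᶜ _ _,
    sum_ite_univ σ _ _]
  refine Finset.sum_congr rfl fun i _ => ?_
  have hiff : (i ∈ τᶜ ∧ insert i τ = σ) ↔ (i ∈ σ ∧ τ = σ.erase i) := by
    constructor
    · rintro ⟨hi, rfl⟩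
      exact ⟨Finset.mem_insert_self i τ, (Finset.erase_insert (Finset.mem_compl.1 hi)).symm⟩
    · rintro ⟨hi, rfl⟩
      exact ⟨by simp, Finset.insert_erase hi⟩
  split_ifs with h1 h2 h3
  · -- values equal
    obtain ⟨hi, hτ⟩ := hiff.1 h1
    rw [hτ, sgn_erase_self, sgn_C, ← smul_eq_C_mul, smul_mul_assoc]
    congr 1
    rw [show (X i : MvPolynomial (Fin n) ℝ) * monomial α 1 = X i ^ 1 * monomial α 1 from by
      rw [pow_one], ← monomial_single_add, add_comm]
  · exact absurd (hiff.1 h1) h2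
  · exact absurd (hiff.2 h3) h1
  · rfl

theorem extD_formMonomial {n : ℕ} (α : Fin n →₀ ℕ) (σ : Finset (Fin n)) :
    extD n (formMonomial α σ) = ∑ i ∈ σᶜ,
      (((α i : ℝ)) * (-1) ^ (σ.filter (fun j => j < i)).card) •
        formMonomial (α - Finsupp.single i 1) (insert i σ) := by
  funext τ
  rw [extD_apply, Finset.sum_apply]
  have lhs_eq : ∀ i ∈ τ, sgn τ i * pderiv i (formMonomial α σ (τ.erase i)) =
      if τ.erase i = σ then sgn τ i * monomial (α - Finsupp.single i 1) ((α i : ℝ)) else 0 := by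
    intro i _; unfold formMonomial
    split_ifs with h
    · rw [pderiv_monomial, one_mul]
    · rw [map_zero, mul_zero]
  have rhs_eq : ∀ i ∈ σᶜ,
      ((((α i : ℝ)) * (-1) ^ (σ.filter (fun j => j < i)).card) •
        formMonomial (α - Finsupp.single i 1) (insert i σ)) τ =
      if τ = insert i σ then
        (((α i : ℝ)) * (-1) ^ (σ.filter (fun j => j < i)).card) •
          monomial (α - Finsupp.single i 1) 1
      else 0 := by
    intro i _
    rw [Pi.smul_apply]; unfold formMonomial
    split_ifs <;> simp
  rw [Finset.sum_congr rfl lhs_eq, Finset.sum_congr rfl rhs_eq, sum_ite_univ τ _ _,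
    sum_ite_univ σᶜ _ _]
  refine Finset.sum_congr rfl fun i _ => ?_
  have hiff : (i ∈ τ ∧ τ.erase i = σ) ↔ (i ∈ σᶜ ∧ τ = insert i σ) := by
    constructor
    · rintro ⟨hi, rfl⟩
      exact ⟨by simp, (Finset.insert_erase hi).symm⟩
    · rintro ⟨hi, rfl⟩
      exact ⟨Finset.mem_insert_self i σ, Finset.erase_insert (Finset.mem_compl.1 hi)⟩
  split_ifs with h1 h2 h3
  · obtain ⟨hi, hτ⟩ := hiff.1 h1
    rw [hτ, sgn_insert_self, sgn_C, ← smul_eq_C_mul]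
    conv_rhs => rw [mul_comm, ← smul_smul, smul_monomial, smul_eq_mul, mul_one]
  · exact absurd (hiff.1 h1) h2
  · exact absurd (hiff.2 h3) h1
  · rfl

theorem formMonomial_mem {n r k : ℕ} {α : Fin n →₀ ℕ} {σ : Finset (Fin n)}
    (hσ : σ.card = k) (hα : mdeg α = r) : formMonomial α σ ∈ Hspace n r k :=
  Submodule.subset_span ⟨α, σ, hσ, hα, rfl⟩

theorem koszul_map (n r k : ℕ) :
    Submodule.map (koszul n) (Hspace n r (k + 1)) ≤ Hspace n (r + 1) k := by
  rw [Hspace, Submodule.map_span, Submodule.span_le]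
  rintro _ ⟨ω, ⟨α, σ, hσ, hα, rfl⟩, rfl⟩
  rw [koszul_formMonomial]
  refine Submodule.sum_mem _ fun i hi => Submodule.smul_mem _ _ ?_
  exact formMonomial_mem (by rw [Finset.card_erase_of_mem hi, hσ]; omega) (by rw [mdeg_add_single, hα])

theorem extD_map (n r k : ℕ) :
    Submodule.map (extD n) (Hspace n (r + 1) k) ≤ Hspace n r (k + 1) := by
  rw [Hspace, Submodule.map_span, Submodule.span_le]
  rintro _ ⟨ω, ⟨α, σ, hσ, hα, rfl⟩, rfl⟩
  rw [extD_formMonomial]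
  refine Submodule.sum_mem _ fun i hi => ?_
  by_cases h : α i = 0
  · rw [h]; simp
  · refine Submodule.smul_mem _ _ (formMonomial_mem ?_ ?_)
    · rw [Finset.card_insert_of_notMem (Finset.mem_compl.1 hi), hσ]
    · have := mdeg_add_single (α - Finsupp.single i 1) i
      rw [sub_add_single h, hα] at this
      omega

theorem koszul_zero_k0 {n r : ℕ} {ω : PolyForm n} (hω : ω ∈ Hspace n r 0) :
    koszul n ω = 0 := by
  have : Hspace n r 0 ≤ LinearMap.ker (koszul n) := by
    rw [Hspace, Submodule.span_le]
    rintro _ ⟨α, σ, hσ, hα, rfl⟩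
    rw [SetLike.mem_coe, LinearMap.mem_ker, koszul_formMonomial,
      Finset.card_eq_zero.1 hσ]
    simp
  exact LinearMap.mem_ker.1 (this hω)

theorem extD_zero_r0 {n k : ℕ} {ω : PolyForm n} (hω : ω ∈ Hspace n 0 k) :
    extD n ω = 0 := by
  have : Hspace n 0 k ≤ LinearMap.ker (extD n) := by
    rw [Hspace, Submodule.span_le]
    rintro _ ⟨α, σ, hσ, hα, rfl⟩
    rw [SetLike.mem_coe, LinearMap.mem_ker, extD_formMonomial]
    refine Finset.sum_eq_zero fun i hi => ?_
    have hzero : α i = 0 := by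
      have h1 := mdeg_eq_sum α
      rw [hα] at h1
      have := Finset.sum_eq_zero_iff.1 h1.symm i (Finset.mem_univ i)
      exact this
    rw [hzero]; simp
  exact LinearMap.mem_ker.1 (this hω)

theorem homotopy_Hspace {n r k : ℕ} {ω : PolyForm n} (hω : ω ∈ Hspace n r k) :
    extD n (koszul n ω) + koszul n (extD n ω) = ((r + k : ℕ) : ℝ) • ω := by
  refine Submodule.span_induction ?_ ?_ ?_ ?_ hω
  · rintro ω ⟨α, σ, hσ, hα, rfl⟩
    funext τ
    rw [Pi.add_apply, homotopy_pointwise, Pi.smul_apply]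
    simp only [formMonomial]
    by_cases hτ : τ = σ
    · simp only [if_pos hτ]
      rw [euler_monomial, hτ, hσ, hα, Nat.cast_smul_eq_nsmul, add_comm r k, add_nsmul]
    · simp only [if_neg hτ]
      simp
  · simp
  · intro x y _ _ hx hy
    simp only [map_add, smul_add, ← hx, ← hy]
    abel
  · intro a x _ hx
    rw [map_smul, map_smul, map_smul, map_smul, ← smul_add, hx, smul_comm]

/-- for `r + k > 0`,
`H_rΛ^k(ℝ^n) = κH_{r-1}Λ^{k+1}(ℝ^n) ⊕ dH_{r+1}Λ^{k-1}(ℝ^n)` (a direct sum). -/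
theorem Hspace_decomp (n r k : ℕ) (h : 0 < r + k) :
    Hspace n r k =
      (if r = 0 then ⊥ else Submodule.map (koszul n) (Hspace n (r - 1) (k + 1))) ⊔
      (if k = 0 then ⊥ else Submodule.map (extD n) (Hspace n (r + 1) (k - 1))) ∧
    Disjoint
      (if r = 0 then (⊥ : Submodule ℝ (PolyForm n))
        else Submodule.map (koszul n) (Hspace n (r - 1) (k + 1)))
      (if k = 0 then (⊥ : Submodule ℝ (PolyForm n))
        else Submodule.map (extD n) (Hspace n (r + 1) (k - 1))) := by
  have hc : ((r + k : ℕ) : ℝ) ≠ 0 := Nat.cast_ne_zero.2 h.ne'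
  constructor
  · apply le_antisymm
    · intro ω hω
      have hh := homotopy_Hspace hω
      have hrepr : ω = ((r + k : ℕ) : ℝ)⁻¹ •
          (extD n (koszul n ω) + koszul n (extD n ω)) := by
        rw [hh, smul_smul, inv_mul_cancel₀ hc, one_smul]
      have hDk : extD n (koszul n ω) ∈
          (if r = 0 then (⊥ : Submodule ℝ (PolyForm n))
            else Submodule.map (koszul n) (Hspace n (r - 1) (k + 1))) ⊔
          (if k = 0 then (⊥ : Submodule ℝ (PolyForm n))
            else Submodule.map (extD n) (Hspace n (r + 1) (k - 1))) := by
        by_cases hk : k = 0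
        · rw [hk] at hω
          rw [koszul_zero_k0 hω, map_zero]
          exact zero_mem _
        · have hk1 : k - 1 + 1 = k := Nat.succ_pred_eq_of_pos (Nat.pos_of_ne_zero hk)
          have h1 : koszul n ω ∈ Hspace n (r + 1) (k - 1) :=
            koszul_map n r (k - 1) ⟨ω, by rw [hk1]; exact hω, rfl⟩
          exact Submodule.mem_sup_right (by rw [if_neg hk]; exact ⟨_, h1, rfl⟩)
      have hKd : koszul n (extD n ω) ∈
          (if r = 0 then (⊥ : Submodule ℝ (PolyForm n))
            else Submodule.map (koszul n) (Hspace n (r - 1) (k + 1))) ⊔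
          (if k = 0 then (⊥ : Submodule ℝ (PolyForm n))
            else Submodule.map (extD n) (Hspace n (r + 1) (k - 1))) := by
        by_cases hr : r = 0
        · rw [hr] at hω
          rw [extD_zero_r0 hω, map_zero]
          exact zero_mem _
        · have hr1 : r - 1 + 1 = r := Nat.succ_pred_eq_of_pos (Nat.pos_of_ne_zero hr)
          have h1 : extD n ω ∈ Hspace n (r - 1) (k + 1) :=
            extD_map n (r - 1) k ⟨ω, by rw [hr1]; exact hω, rfl⟩
          exact Submodule.mem_sup_left (by rw [if_neg hr]; exact ⟨_, h1, rfl⟩)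
      rw [hrepr]
      exact Submodule.smul_mem _ _ (add_mem hDk hKd)
    · refine sup_le ?_ ?_
      · by_cases hr : r = 0
        · rw [if_pos hr]; exact bot_le
        · rw [if_neg hr]
          have hr1 : r - 1 + 1 = r := Nat.succ_pred_eq_of_pos (Nat.pos_of_ne_zero hr)
          have h1 := koszul_map n (r - 1) k
          rw [hr1] at h1
          exact h1
      · by_cases hk : k = 0
        · rw [if_pos hk]; exact bot_le
        · rw [if_neg hk]
          have hk1 : k - 1 + 1 = k := Nat.succ_pred_eq_of_pos (Nat.pos_of_ne_zero hk)
          have h1 := extD_map n r (k - 1)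
          rw [hk1] at h1
          exact h1
  · by_cases hr : r = 0
    · rw [if_pos hr]; exact disjoint_bot_left
    by_cases hk : k = 0
    · rw [if_pos hk]; exact disjoint_bot_right
    rw [if_neg hr, if_neg hk, Submodule.disjoint_def]
    intro x hxA hxB
    obtain ⟨η, hη, hxη⟩ := hxA
    obtain ⟨μ, hμ, hxμ⟩ := hxB
    have hr1 : r - 1 + 1 = r := Nat.succ_pred_eq_of_pos (Nat.pos_of_ne_zero hr)
    have hx : x ∈ Hspace n r k := by
      have h1 := koszul_map n (r - 1) k ⟨η, hη, hxη⟩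
      rw [hr1] at h1
      exact h1
    have hh := homotopy_Hspace hx
    have hκ : koszul n x = 0 := by
      rw [← hxη]; exact koszul_koszul n η
    have hd : extD n x = 0 := by
      rw [← hxμ]; exact extD_extD n μ
    rw [hκ, hd, map_zero, map_zero, add_zero] at hh
    calc x = ((r + k : ℕ) : ℝ)⁻¹ • (((r + k : ℕ) : ℝ) • x) := by
            rw [smul_smul, inv_mul_cancel₀ hc, one_smul]
      _ = ((r + k : ℕ) : ℝ)⁻¹ • (0 : PolyForm n) := by rw [← hh]
      _ = 0 := smul_zero _
end

section
/- The dimension of the trimmed polynomial space P_r^−Λ^k(ℝ^n) := P_{r−1}Λ^k(ℝ^n) ⊕ κH_{r−1}Λ^{k+1}(ℝ^n) equals binomial(r+n, r+k)·binomial(r+k−1, k). -/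
open MvPolynomial

namespace PminusAux
open Finset Submodule Module

variable {n : ℕ}

lemma mdeg_eq_sum (α : Fin n →₀ ℕ) : mdeg α = ∑ i, α i :=
  Finsupp.sum_fintype _ _ (fun _ => rfl)

lemma mdeg_eq_degree (α : Fin n →₀ ℕ) : mdeg α = α.degree := rfl

lemma mdeg_eq_card (α : Fin n →₀ ℕ) : mdeg α = Multiset.card (Finsupp.toMultiset α) :=
  (Finsupp.card_toMultiset α).symm

/-- The monomials of degree `r` are in bijection with `Sym (Fin n) r`. -/
noncomputable def degEquivSym (n r : ℕ) : {α : Fin n →₀ ℕ // mdeg α = r} ≃ Sym (Fin n) r where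
  toFun a := ⟨Finsupp.toMultiset a.1, by rw [← mdeg_eq_card]; exact a.2⟩
  invFun s := ⟨Multiset.toFinsupp s.1, by
    rw [mdeg_eq_card, Multiset.toFinsupp_toMultiset]; exact s.2⟩
  left_inv a := Subtype.ext (Finsupp.toMultiset_toFinsupp a.1)
  right_inv s := Subtype.ext (Multiset.toFinsupp_toMultiset s.1)

instance (r : ℕ) : Finite {α : Fin n →₀ ℕ // mdeg α = r} :=
  Finite.of_equiv _ (degEquivSym n r).symm

lemma card_mdeg_eq (n r : ℕ) :
    Nat.card {α : Fin n →₀ ℕ // mdeg α = r} = (n + r - 1).choose r := by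
  rw [Nat.card_congr (degEquivSym n r), Nat.card_eq_fintype_card,
    Sym.card_sym_eq_choose, Fintype.card_fin]

/-- Adding a slack variable: monomials of degree at most `r` in `n` variables correspond to
monomials of degree exactly `r` in `n+1` variables. -/
noncomputable def degLEEquiv (n r : ℕ) :
    {α : Fin n →₀ ℕ // mdeg α ≤ r} ≃ {β : Fin (n + 1) →₀ ℕ // mdeg β = r} where
  toFun a := ⟨Finsupp.equivFunOnFinite.symm (Fin.snoc (fun i => a.1 i) (r - mdeg a.1)), by
    rw [mdeg_eq_sum]
    simp only [Finsupp.coe_equivFunOnFinite_symm]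
    rw [Fin.sum_univ_castSucc]
    simp only [Fin.snoc_castSucc, Fin.snoc_last]
    rw [← mdeg_eq_sum]
    have := a.2
    omega⟩
  invFun b := ⟨Finsupp.equivFunOnFinite.symm (fun i => b.1 i.castSucc), by
    have hb := b.2
    rw [mdeg_eq_sum] at hb ⊢
    simp only [Finsupp.coe_equivFunOnFinite_symm]
    rw [Fin.sum_univ_castSucc] at hb
    omega⟩
  left_inv a := by
    apply Subtype.ext
    ext i
    simp [Fin.snoc_castSucc]
  right_inv b := by
    apply Subtype.ext
    ext j
    simp only [Finsupp.coe_equivFunOnFinite_symm]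
    induction j using Fin.lastCases with
    | last =>
      rw [Fin.snoc_last]
      have hb := b.2
      rw [mdeg_eq_sum, Fin.sum_univ_castSucc] at hb
      have : mdeg (Finsupp.equivFunOnFinite.symm (fun i : Fin n => b.1 i.castSucc))
          = ∑ i : Fin n, b.1 i.castSucc := by
        rw [mdeg_eq_sum]; simp
      omega
    | cast i => simp

instance (r : ℕ) : Finite {α : Fin n →₀ ℕ // mdeg α ≤ r} :=
  Finite.of_equiv _ (degLEEquiv n r).symm

lemma card_mdeg_le (n r : ℕ) :
    Nat.card {α : Fin n →₀ ℕ // mdeg α ≤ r} = (n + r).choose r := by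
  rw [Nat.card_congr (degLEEquiv n r), card_mdeg_eq]
  congr 1
  omega

end PminusAux
namespace PminusAux
open Finset Submodule Module

variable {n : ℕ}

/-- The basis of `PolyForm n` given by form monomials. -/
noncomputable def formBasis (n : ℕ) :
    Basis ((_ : Finset (Fin n)) × (Fin n →₀ ℕ)) ℝ (PolyForm n) :=
  Pi.basis (fun _ => MvPolynomial.basisMonomials (Fin n) ℝ)

lemma formBasis_apply (σ : Finset (Fin n)) (α : Fin n →₀ ℕ) :
    formBasis n ⟨σ, α⟩ = formMonomial α σ := by
  funext τ
  rw [formBasis, Pi.basis_apply]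
  simp only [MvPolynomial.coe_basisMonomials]
  rw [Pi.single_apply]
  rfl

lemma finrank_span_basis_image {ι M : Type*} [AddCommGroup M] [Module ℝ M]
    (b : Basis ι ℝ M) (s : Set ι) (hs : s.Finite) :
    finrank ℝ (span ℝ (⇑b '' s)) = Nat.card s := by
  haveI := hs.fintype
  have hli : LinearIndependent ℝ (fun x : s => b x) :=
    b.linearIndependent.comp _ Subtype.val_injective
  rw [Set.image_eq_range, finrank_span_eq_card hli, Nat.card_eq_fintype_card]

/-- The generating set of a monomial-form span, as an image of the basis. -/
lemma form_set_eq (P : (Fin n →₀ ℕ) → Prop) (k : ℕ) :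
    {ω : PolyForm n | ∃ α σ, σ.card = k ∧ P α ∧ ω = formMonomial α σ} =
      ⇑(formBasis n) '' {p | p.1.card = k ∧ P p.2} := by
  ext ω
  constructor
  · rintro ⟨α, σ, hσ, hP, rfl⟩
    exact ⟨⟨σ, α⟩, ⟨hσ, hP⟩, formBasis_apply σ α⟩
  · rintro ⟨⟨σ, α⟩, ⟨hσ, hP⟩, rfl⟩
    exact ⟨α, σ, hσ, hP, formBasis_apply σ α⟩


/-- The pair set splits as a product. -/
def pairEquiv (P : (Fin n →₀ ℕ) → Prop) (k : ℕ) :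
    {p : (_ : Finset (Fin n)) × (Fin n →₀ ℕ) | p.1.card = k ∧ P p.2} ≃
      {σ : Finset (Fin n) // σ.card = k} × {α : Fin n →₀ ℕ // P α} where
  toFun p := (⟨p.1.1, p.2.1⟩, ⟨p.1.2, p.2.2⟩)
  invFun q := ⟨⟨q.1.1, q.2.1⟩, q.1.2, q.2.2⟩
  left_inv _ := rfl
  right_inv _ := rfl

lemma finrank_span_form (P : (Fin n →₀ ℕ) → Prop) [hf : Finite {α : Fin n →₀ ℕ // P α}] (k : ℕ) :
    finrank ℝ (span ℝ {ω : PolyForm n | ∃ α σ, σ.card = k ∧ P α ∧ ω = formMonomial α σ}) =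
      Nat.card {α : Fin n →₀ ℕ // P α} * n.choose k := by
  rw [form_set_eq]
  haveI : Finite ({p : (_ : Finset (Fin n)) × (Fin n →₀ ℕ) | p.1.card = k ∧ P p.2} : Set _) :=
    Finite.of_equiv _ (pairEquiv P k).symm
  have hfin : {p : (_ : Finset (Fin n)) × (Fin n →₀ ℕ) | p.1.card = k ∧ P p.2}.Finite :=
    Set.finite_coe_iff.mp this
  rw [finrank_span_basis_image _ _ hfin]
  rw [Nat.card_congr (pairEquiv P k), Nat.card_prod, Nat.card_eq_fintype_card,
    Fintype.card_finset_len, Fintype.card_fin, mul_comm]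

lemma finrank_Hspace (n r k : ℕ) :
    finrank ℝ (Hspace n r k) = (n + r - 1).choose r * n.choose k := by
  rw [Hspace, finrank_span_form (fun α => mdeg α = r), card_mdeg_eq]

lemma finrank_Pspace (n r k : ℕ) :
    finrank ℝ (Pspace n r k) = (n + r).choose r * n.choose k := by
  rw [Pspace, finrank_span_form (fun α => mdeg α ≤ r), card_mdeg_le]

instance (n r k : ℕ) : FiniteDimensional ℝ (Hspace n r k) := by
  rw [Hspace, form_set_eq (fun α => mdeg α = r)]
  haveI : Finite ({p : (_ : Finset (Fin n)) × (Fin n →₀ ℕ) | p.1.card = k ∧ mdeg p.2 = r} : Set _) :=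
    Finite.of_equiv _ (pairEquiv (fun α => mdeg α = r) k).symm
  exact FiniteDimensional.span_of_finite ℝ ((Set.finite_coe_iff.mp this).image _)

instance (n r k : ℕ) : FiniteDimensional ℝ (Pspace n r k) := by
  rw [Pspace, form_set_eq (fun α => mdeg α ≤ r)]
  haveI : Finite ({p : (_ : Finset (Fin n)) × (Fin n →₀ ℕ) | p.1.card = k ∧ mdeg p.2 ≤ r} : Set _) :=
    Finite.of_equiv _ (pairEquiv (fun α => mdeg α ≤ r) k).symm
  exact FiniteDimensional.span_of_finite ℝ ((Set.finite_coe_iff.mp this).image _)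

end PminusAux
namespace PminusAux
open Finset Submodule Module

variable {n : ℕ}

lemma sgn_insert_self (A : Finset (Fin n)) (i : Fin n) : sgn (insert i A) i = sgn A i := by
  unfold sgn
  rw [Finset.filter_insert, if_neg (lt_irrefl i)]

lemma sgn_erase_self (A : Finset (Fin n)) (i : Fin n) : sgn (A.erase i) i = sgn A i := by
  unfold sgn
  rw [Finset.filter_erase, Finset.erase_eq_of_notMem]
  intro h
  exact absurd (Finset.mem_filter.mp h).2 (lt_irrefl i)

lemma sgn_insert {A : Finset (Fin n)} {i : Fin n} (j : Fin n) (h : i ∉ A) (hij : i ≠ j) :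
    sgn (insert i A) j = (if i < j then -1 else 1) * sgn A j := by
  unfold sgn
  rw [Finset.filter_insert]
  by_cases hlt : i < j
  · rw [if_pos hlt, if_pos hlt,
      Finset.card_insert_of_notMem (fun hm => h (Finset.mem_of_mem_filter i hm)), pow_succ]
    ring
  · rw [if_neg hlt, if_neg hlt, one_mul]

lemma sgn_sq (A : Finset (Fin n)) (i : Fin n) : sgn A i * sgn A i = 1 := by
  unfold sgn
  rw [← mul_pow, neg_mul_neg, one_mul, one_pow]

lemma sgn_eq_C (A : Finset (Fin n)) (i : Fin n) :
    sgn A i = MvPolynomial.C ((-1 : ℝ) ^ (A.filter (fun j => j < i)).card) := by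
  unfold sgn
  rw [map_pow, map_neg, map_one]

lemma sgn_mul_pderiv (A : Finset (Fin n)) (l i : Fin n) (f : MvPolynomial (Fin n) ℝ) :
    pderiv i (sgn A l * f) = sgn A l * pderiv i f := by
  rw [sgn_eq_C, pderiv_C_mul]

/-- Antisymmetry of signs, both indices outside. -/
lemma sgn_antisym_out {σ : Finset (Fin n)} {i j : Fin n} (hi : i ∉ σ) (hj : j ∉ σ)
    (hij : i ≠ j) :
    sgn σ i * sgn (insert i σ) j = -(sgn σ j * sgn (insert j σ) i) := by
  rw [sgn_insert j hi hij, sgn_insert i hj hij.symm]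
  rcases hij.lt_or_gt with h | h
  · rw [if_pos h, if_neg (asymm h)]; ring
  · rw [if_neg (asymm h), if_pos h]; ring

/-- Antisymmetry of signs, first index inside, second outside. -/
lemma sgn_antisym_in {σ : Finset (Fin n)} {i j : Fin n} (hi : i ∈ σ) (hj : j ∉ σ) :
    sgn σ i * sgn (σ.erase i) j = -(sgn σ j * sgn (insert j σ) i) := by
  have hij : i ≠ j := fun h => hj (h ▸ hi)
  obtain ⟨A, hiA, rfl⟩ : ∃ A, i ∉ A ∧ σ = insert i A :=
    ⟨σ.erase i, Finset.notMem_erase i σ, (Finset.insert_erase hi).symm⟩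
  have hjA : j ∉ A := fun h => hj (Finset.mem_insert_of_mem h)
  rw [Finset.erase_insert hiA, sgn_insert_self, sgn_insert j hiA hij, Finset.insert_comm,
    sgn_insert_self, sgn_insert i hjA hij.symm]
  rcases hij.lt_or_gt with h | h
  · rw [if_pos h, if_neg (asymm h)]; ring
  · rw [if_neg (asymm h), if_pos h]; ring

/-- A double sum over distinct pairs of an antisymmetric function vanishes. -/
lemma sum_antisym {M : Type*} [AddCommGroup M] [Module ℝ M] {ι : Type*} [DecidableEq ι]
    (T : Finset ι) (f : ι → ι → M)
    (hf : ∀ i ∈ T, ∀ j ∈ T, i ≠ j → f i j = -f j i) :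
    ∑ i ∈ T, ∑ j ∈ T.erase i, f i j = 0 := by
  have hswap : ∑ i ∈ T, ∑ j ∈ T.erase i, f i j = ∑ j ∈ T, ∑ i ∈ T.erase j, f i j := by
    refine Finset.sum_comm' ?_
    intro x y
    constructor
    · rintro ⟨h1, h2⟩
      exact ⟨Finset.mem_erase.mpr ⟨fun h => (Finset.mem_erase.mp h2).1 h.symm, h1⟩,
        (Finset.mem_erase.mp h2).2⟩
    · rintro ⟨h1, h2⟩
      exact ⟨(Finset.mem_erase.mp h1).2,
        Finset.mem_erase.mpr ⟨fun h => (Finset.mem_erase.mp h1).1 h.symm, h2⟩⟩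
  have hneg : ∑ i ∈ T, ∑ j ∈ T.erase i, f i j = -∑ i ∈ T, ∑ j ∈ T.erase i, f i j := by
    nth_rewrite 1 [hswap]
    rw [← Finset.sum_neg_distrib]
    refine Finset.sum_congr rfl fun j hj => ?_
    rw [← Finset.sum_neg_distrib]
    refine Finset.sum_congr rfl fun i hi => ?_
    exact hf i (Finset.mem_erase.mp hi).2 j hj (Finset.mem_erase.mp hi).1
  have h2 : (2 : ℝ) • (∑ i ∈ T, ∑ j ∈ T.erase i, f i j) = 0 := by
    rw [two_smul]
    nth_rewrite 2 [hneg]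
    exact add_neg_cancel _
  have := smul_eq_zero.mp h2
  simpa using this

lemma koszul_apply (ω : PolyForm n) (σ : Finset (Fin n)) :
    koszul n ω σ = ∑ i ∈ σᶜ, sgn σ i * MvPolynomial.X i * ω (insert i σ) := rfl

lemma extD_apply (ω : PolyForm n) (σ : Finset (Fin n)) :
    extD n ω σ = ∑ i ∈ σ, sgn σ i * MvPolynomial.pderiv i (ω (σ.erase i)) := rfl

lemma koszul_koszul (ω : PolyForm n) : koszul n (koszul n ω) = 0 := by
  funext σ
  rw [koszul_apply]
  have step : ∀ i ∈ σᶜ, sgn σ i * MvPolynomial.X i * (koszul n ω (insert i σ)) =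
      ∑ j ∈ σᶜ.erase i, (sgn σ i * sgn (insert i σ) j) *
        (MvPolynomial.X i * MvPolynomial.X j * ω (insert j (insert i σ))) := by
    intro i _
    rw [koszul_apply, Finset.compl_insert, Finset.mul_sum]
    exact Finset.sum_congr rfl fun j _ => by ring
  rw [Finset.sum_congr rfl step]
  show _ = (0 : PolyForm n) σ
  rw [Pi.zero_apply]
  refine sum_antisym σᶜ _ ?_
  intro i hi j hj hij
  rw [sgn_antisym_out (Finset.mem_compl.mp hi) (Finset.mem_compl.mp hj) hij,
    Finset.insert_comm]
  ring

end PminusAux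
namespace PminusAux
open Finset Submodule Module MvPolynomial

variable {n : ℕ}

/-- The pointwise Cartan homotopy formula: `dκ + κd = E + deg` where `E` is the Euler
operator. -/
lemma homotopy_pointwise (ω : PolyForm n) (σ : Finset (Fin n)) :
    extD n (koszul n ω) σ + koszul n (extD n ω) σ =
      σ.card • ω σ + ∑ i : Fin n, X i * pderiv i (ω σ) := by
  classical
  have hA : ∀ i ∈ σ, sgn σ i * pderiv i (koszul n ω (σ.erase i)) =
      (ω σ + X i * pderiv i (ω σ)) +
      ∑ j ∈ σᶜ, (sgn σ i * sgn (σ.erase i) j) *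
        (X j * pderiv i (ω (insert j (σ.erase i)))) := by
    intro i hi
    have hi' : i ∉ σᶜ := by simp [Finset.mem_compl, hi]
    have h1 : koszul n ω (σ.erase i) =
        sgn (σ.erase i) i * (X i * ω σ) +
        ∑ j ∈ σᶜ, sgn (σ.erase i) j * (X j * ω (insert j (σ.erase i))) := by
      rw [koszul_apply, Finset.compl_erase, Finset.sum_insert hi', Finset.insert_erase hi,
        mul_assoc]
      exact congrArg _ (Finset.sum_congr rfl fun j _ => mul_assoc _ _ _)
    rw [h1, map_add, map_sum, mul_add]
    congr 1
    · rw [sgn_mul_pderiv, sgn_erase_self, ← mul_assoc, sgn_sq, one_mul, pderiv_mul,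
        pderiv_X_self, one_mul]
    · rw [Finset.mul_sum]
      refine Finset.sum_congr rfl fun j hj => ?_
      have hji : j ≠ i := fun h => (Finset.mem_compl.mp hj) (h ▸ hi)
      rw [sgn_mul_pderiv, pderiv_mul, pderiv_X_of_ne hji, zero_mul, zero_add]
      ring
  have hB : ∀ j ∈ σᶜ, sgn σ j * X j * (extD n ω (insert j σ)) =
      X j * pderiv j (ω σ) +
      ∑ i ∈ σ, (sgn σ j * sgn (insert j σ) i) *
        (X j * pderiv i (ω (insert j (σ.erase i)))) := by
    intro j hj
    have hjσ : j ∉ σ := Finset.mem_compl.mp hj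
    have h1 : extD n ω (insert j σ) =
        sgn (insert j σ) j * pderiv j (ω σ) +
        ∑ i ∈ σ, sgn (insert j σ) i * pderiv i (ω (insert j (σ.erase i))) := by
      rw [extD_apply, Finset.sum_insert hjσ, Finset.erase_insert hjσ]
      congr 1
      refine Finset.sum_congr rfl fun i hi => ?_
      rw [Finset.erase_insert_of_ne (fun (h : j = i) => hjσ (h ▸ hi))]
    rw [h1, mul_add]
    congr 1
    · rw [sgn_insert_self]
      calc sgn σ j * X j * (sgn σ j * pderiv j (ω σ))
          = (sgn σ j * sgn σ j) * (X j * pderiv j (ω σ)) := by ring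
        _ = X j * pderiv j (ω σ) := by rw [sgn_sq, one_mul]
    · rw [Finset.mul_sum]
      exact Finset.sum_congr rfl fun i hi => by ring
  have hcancel : ∑ i ∈ σ, ∑ j ∈ σᶜ, (sgn σ i * sgn (σ.erase i) j) *
        (X j * pderiv i (ω (insert j (σ.erase i)))) +
      ∑ j ∈ σᶜ, ∑ i ∈ σ, (sgn σ j * sgn (insert j σ) i) *
        (X j * pderiv i (ω (insert j (σ.erase i)))) = 0 := by
    have hs : ∑ j ∈ σᶜ, ∑ i ∈ σ, (sgn σ j * sgn (insert j σ) i) *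
          (X j * pderiv i (ω (insert j (σ.erase i)))) =
        ∑ i ∈ σ, ∑ j ∈ σᶜ, (sgn σ j * sgn (insert j σ) i) *
          (X j * pderiv i (ω (insert j (σ.erase i)))) := Finset.sum_comm
    rw [hs, ← Finset.sum_add_distrib]
    refine Finset.sum_eq_zero fun i hi => ?_
    rw [← Finset.sum_add_distrib]
    refine Finset.sum_eq_zero fun j hj => ?_
    rw [sgn_antisym_in hi (Finset.mem_compl.mp hj)]
    ring
  rw [extD_apply, koszul_apply, Finset.sum_congr rfl hA, Finset.sum_congr rfl hB,
    Finset.sum_add_distrib, Finset.sum_add_distrib, Finset.sum_add_distrib, Finset.sum_const,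
    ← Finset.sum_add_sum_compl σ (fun i => X i * pderiv i (ω σ))]
  linear_combination hcancel

end PminusAux
namespace PminusAux
open Finset Submodule Module MvPolynomial

variable {n : ℕ}

lemma euler_monomial (α : Fin n →₀ ℕ) (c : ℝ) :
    ∑ i : Fin n, X i * pderiv i (monomial α c) = (mdeg α : ℝ) • monomial α c := by
  have key : ∀ i : Fin n, X i * pderiv i (monomial α c) = (α i : ℝ) • monomial α c := by
    intro i
    rw [pderiv_monomial]
    by_cases h : α i = 0
    · rw [h]; simp
    · have hs : Finsupp.single i 1 + (α - Finsupp.single i 1) = α := by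
        ext j
        rw [Finsupp.add_apply, Finsupp.tsub_apply]
        rcases eq_or_ne j i with rfl | hj
        · rw [Finsupp.single_eq_same]; omega
        · rw [Finsupp.single_eq_of_ne' (Ne.symm hj)]; omega
      have hX : (X i : MvPolynomial (Fin n) ℝ) = monomial (Finsupp.single i 1) 1 := rfl
      rw [hX, monomial_mul, hs, smul_monomial]
      congr 1
      rw [smul_eq_mul]
      ring
  rw [Finset.sum_congr rfl (fun i _ => key i), ← Finset.sum_smul, mdeg_eq_sum]
  norm_cast

lemma mdeg_of_mem_support {p : MvPolynomial (Fin n) ℝ} {r : ℕ} (hp : p.IsHomogeneous r)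
    {d : Fin n →₀ ℕ} (hd : d ∈ p.support) : mdeg d = r := by
  have := hp (mem_support_iff.mp hd)
  rw [mdeg_eq_degree, Finsupp.degree_eq_weight_one]
  exact this

lemma euler {p : MvPolynomial (Fin n) ℝ} {r : ℕ} (hp : p.IsHomogeneous r) :
    ∑ i : Fin n, X i * pderiv i p = (r : ℝ) • p := by
  conv_lhs => rw [← support_sum_monomial_coeff p]
  conv_rhs => rw [← support_sum_monomial_coeff p]
  rw [Finset.smul_sum]
  have expand : ∀ i : Fin n, X i * pderiv i (∑ d ∈ p.support, monomial d (coeff d p)) =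
      ∑ d ∈ p.support, X i * pderiv i (monomial d (coeff d p)) := fun i => by
    rw [map_sum, Finset.mul_sum]
  rw [Finset.sum_congr rfl (fun i _ => expand i), Finset.sum_comm]
  refine Finset.sum_congr rfl fun d hdm => ?_
  rw [euler_monomial, mdeg_of_mem_support hp hdm]

lemma pderiv_isHomogeneous {p : MvPolynomial (Fin n) ℝ} {r : ℕ}
    (hp : p.IsHomogeneous (r + 1)) (i : Fin n) : (pderiv i p).IsHomogeneous r := by
  conv in p => rw [← support_sum_monomial_coeff p]
  rw [map_sum]
  refine IsHomogeneous.sum _ _ _ fun d hd => ?_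
  rw [pderiv_monomial]
  by_cases h : d i = 0
  · rw [h]
    push_cast
    rw [mul_zero, monomial_zero]
    exact isHomogeneous_zero _ _ _
  · have hdeg : mdeg d = r + 1 := mdeg_of_mem_support hp hd
    have hgoal : mdeg (d - Finsupp.single i 1) = r := by
      rw [mdeg_eq_sum] at hdeg ⊢
      rw [← Finset.sum_erase_add _ _ (Finset.mem_univ i)] at hdeg ⊢
      have h1 : ∀ j ∈ Finset.univ.erase i, ((d - Finsupp.single i 1 : Fin n →₀ ℕ)) j = d j := by
        intro j hj
        rw [Finsupp.tsub_apply, Finsupp.single_eq_of_ne' (Ne.symm (Finset.mem_erase.mp hj).1)]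
        omega
      rw [Finset.sum_congr rfl h1]
      have h2 : ((d - Finsupp.single i 1 : Fin n →₀ ℕ)) i = d i - 1 := by
        rw [Finsupp.tsub_apply, Finsupp.single_eq_same]
      rw [h2]
      set S := ∑ x ∈ Finset.univ.erase i, d x with hS
      omega
    exact isHomogeneous_monomial _ ((mdeg_eq_degree _).symm.trans hgoal)

lemma pderiv_eq_zero_of_isHomogeneous_zero {p : MvPolynomial (Fin n) ℝ}
    (hp : p.IsHomogeneous 0) (i : Fin n) : pderiv i p = 0 := by
  conv in p => rw [← support_sum_monomial_coeff p]
  rw [map_sum]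
  refine Finset.sum_eq_zero fun d hd => ?_
  have hdeg : mdeg d = 0 := mdeg_of_mem_support hp hd
  have hdi : d i = 0 := by
    rw [mdeg_eq_sum] at hdeg
    have := Finset.sum_eq_zero_iff.mp hdeg i (Finset.mem_univ i)
    exact this
  rw [pderiv_monomial, hdi]
  push_cast
  rw [mul_zero, monomial_zero]

/-- Characterization of `Hspace` as a submodule defined by support and homogeneity
conditions. -/
noncomputable def Hchar (n r k : ℕ) : Submodule ℝ (PolyForm n) where
  carrier := {ω | (∀ σ, σ.card ≠ k → ω σ = 0) ∧ ∀ σ, (ω σ).IsHomogeneous r}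
  zero_mem' := ⟨fun _ _ => rfl, fun _ => isHomogeneous_zero _ _ _⟩
  add_mem' := fun ha hb => ⟨fun σ h => by
      simp only [Pi.add_apply, ha.1 σ h, hb.1 σ h, add_zero],
    fun σ => (ha.2 σ).add (hb.2 σ)⟩
  smul_mem' := fun c ω h => ⟨fun σ hσ => by simp only [Pi.smul_apply, h.1 σ hσ, smul_zero],
    fun σ => by
      rw [Pi.smul_apply, smul_eq_C_mul]
      simpa using (isHomogeneous_C (Fin n) c).mul (h.2 σ)⟩

/-- Upper bound for `Pspace`. -/
noncomputable def Pchar (n r k : ℕ) : Submodule ℝ (PolyForm n) where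
  carrier := {ω | (∀ σ, σ.card ≠ k → ω σ = 0) ∧ ∀ σ, (ω σ).totalDegree ≤ r}
  zero_mem' := ⟨fun _ _ => rfl, fun σ => by simp⟩
  add_mem' := fun ha hb => ⟨fun σ h => by
      simp only [Pi.add_apply, ha.1 σ h, hb.1 σ h, add_zero],
    fun σ => le_trans (totalDegree_add _ _) (max_le (ha.2 σ) (hb.2 σ))⟩
  smul_mem' := fun c ω h => ⟨fun σ hσ => by simp only [Pi.smul_apply, h.1 σ hσ, smul_zero],
    fun σ => le_trans (totalDegree_smul_le c (ω σ)) (h.2 σ)⟩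

end PminusAux
namespace PminusAux
open Finset Submodule Module MvPolynomial

variable {n : ℕ}

lemma mem_Hchar_iff {r k : ℕ} {ω : PolyForm n} :
    ω ∈ Hchar n r k ↔ (∀ σ, σ.card ≠ k → ω σ = 0) ∧ ∀ σ, (ω σ).IsHomogeneous r := Iff.rfl

lemma mem_Pchar_iff {r k : ℕ} {ω : PolyForm n} :
    ω ∈ Pchar n r k ↔ (∀ σ, σ.card ≠ k → ω σ = 0) ∧ ∀ σ, (ω σ).totalDegree ≤ r := Iff.rfl

lemma formMonomial_apply (α : Fin n →₀ ℕ) (σ τ : Finset (Fin n)) :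
    formMonomial α σ τ = if τ = σ then monomial α 1 else 0 := rfl

lemma Hspace_le_Hchar (n r k : ℕ) : Hspace n r k ≤ Hchar n r k := by
  rw [Hspace]
  refine span_le.mpr ?_
  rintro ω ⟨α, σ0, hσ, hα, rfl⟩
  rw [SetLike.mem_coe, mem_Hchar_iff]
  constructor
  · intro τ hτ
    rw [formMonomial_apply, if_neg (fun (h : τ = σ0) => hτ (by rw [h]; exact hσ))]
  · intro τ
    rw [formMonomial_apply]
    by_cases h : τ = σ0
    · rw [if_pos h]
      exact isHomogeneous_monomial _ ((mdeg_eq_degree α).symm.trans hα)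
    · rw [if_neg h]
      exact isHomogeneous_zero _ _ _

lemma Pspace_le_Pchar (n r k : ℕ) : Pspace n r k ≤ Pchar n r k := by
  rw [Pspace]
  refine span_le.mpr ?_
  rintro ω ⟨α, σ0, hσ, hα, rfl⟩
  rw [SetLike.mem_coe, mem_Pchar_iff]
  constructor
  · intro τ hτ
    rw [formMonomial_apply, if_neg (fun (h : τ = σ0) => hτ (by rw [h]; exact hσ))]
  · intro τ
    rw [formMonomial_apply]
    by_cases h : τ = σ0
    · rw [if_pos h, totalDegree_monomial _ (one_ne_zero)]
      exact hα
    · rw [if_neg h]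
      simp

lemma Hchar_le_Hspace (n r k : ℕ) : Hchar n r k ≤ Hspace n r k := by
  intro ω hω
  obtain ⟨h0, hH⟩ := mem_Hchar_iff.mp hω
  have hrep : ω = ∑ σ : Finset (Fin n), ∑ d ∈ (ω σ).support,
      coeff d (ω σ) • formMonomial d σ := by
    funext τ
    rw [Finset.sum_apply]
    have hterm : ∀ σ : Finset (Fin n),
        (∑ d ∈ (ω σ).support, coeff d (ω σ) • formMonomial d σ) τ
          = if τ = σ then ω σ else 0 := by
      intro σ
      rw [Finset.sum_apply]
      by_cases h : τ = σ
      · rw [if_pos h]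
        subst h
        calc ∑ d ∈ (ω τ).support, (coeff d (ω τ) • formMonomial d τ) τ
            = ∑ d ∈ (ω τ).support, monomial d (coeff d (ω τ)) := by
              refine Finset.sum_congr rfl fun d _ => ?_
              rw [Pi.smul_apply, formMonomial_apply, if_pos rfl, smul_monomial,
                smul_eq_mul, mul_one]
          _ = ω τ := support_sum_monomial_coeff _
      · rw [if_neg h]
        refine Finset.sum_eq_zero fun d _ => ?_
        rw [Pi.smul_apply, formMonomial_apply, if_neg h, smul_zero]
    rw [Finset.sum_congr rfl (fun σ _ => hterm σ), Finset.sum_ite_eq]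
    simp
  rw [hrep]
  refine sum_mem fun σ _ => sum_mem fun d hd => smul_mem _ _ (subset_span ?_)
  have hσ : σ.card = k := by
    by_contra hc
    rw [h0 σ hc] at hd
    simp at hd
  exact ⟨d, σ, hσ, mdeg_of_mem_support (hH σ) hd, rfl⟩

lemma koszul_mem_Hchar {r k : ℕ} {ω : PolyForm n} (h : ω ∈ Hchar n r (k + 1)) :
    koszul n ω ∈ Hchar n (r + 1) k := by
  obtain ⟨h0, hH⟩ := mem_Hchar_iff.mp h
  rw [mem_Hchar_iff]
  constructor
  · intro σ hσ
    rw [koszul_apply]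
    refine Finset.sum_eq_zero fun i hi => ?_
    rw [h0 (insert i σ)
      (by rw [Finset.card_insert_of_notMem (Finset.mem_compl.mp hi)]; omega), mul_zero]
  · intro σ
    rw [koszul_apply]
    refine IsHomogeneous.sum _ _ _ fun i _ => ?_
    have hsgn : (sgn σ i).IsHomogeneous 0 := by
      rw [sgn_eq_C]; exact isHomogeneous_C _ _
    have := (hsgn.mul (isHomogeneous_X ℝ i)).mul (hH (insert i σ))
    simpa [add_comm] using this

lemma extD_mem_Hchar {r k : ℕ} {ω : PolyForm n} (h : ω ∈ Hchar n (r + 1) k) :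
    extD n ω ∈ Hchar n r (k + 1) := by
  obtain ⟨h0, hH⟩ := mem_Hchar_iff.mp h
  rw [mem_Hchar_iff]
  constructor
  · intro σ hσ
    rw [extD_apply]
    refine Finset.sum_eq_zero fun i hi => ?_
    have hcard : σ.card ≠ 0 := by
      intro hc
      exact absurd (Finset.card_eq_zero.mp hc ▸ hi) (Finset.notMem_empty i)
    rw [h0 (σ.erase i) (by rw [Finset.card_erase_of_mem hi]; omega), map_zero, mul_zero]
  · intro σ
    rw [extD_apply]
    refine IsHomogeneous.sum _ _ _ fun i _ => ?_
    have hsgn : (sgn σ i).IsHomogeneous 0 := by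
      rw [sgn_eq_C]; exact isHomogeneous_C _ _
    have := hsgn.mul (pderiv_isHomogeneous (hH (σ.erase i)) i)
    simpa using this

lemma extD_eq_zero_of_H0 {k : ℕ} {ω : PolyForm n} (h : ω ∈ Hchar n 0 k) :
    extD n ω = 0 := by
  obtain ⟨h0, hH⟩ := mem_Hchar_iff.mp h
  funext σ
  rw [extD_apply]
  refine Finset.sum_eq_zero fun i _ => ?_
  rw [pderiv_eq_zero_of_isHomogeneous_zero (hH (σ.erase i)) i, mul_zero]

lemma homotopy_H {r k : ℕ} {ω : PolyForm n} (h : ω ∈ Hspace n r k) :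
    extD n (koszul n ω) + koszul n (extD n ω) = ((r + k : ℕ) : ℝ) • ω := by
  obtain ⟨h0, hH⟩ := mem_Hchar_iff.mp (Hspace_le_Hchar n r k h)
  funext σ
  rw [Pi.add_apply, Pi.smul_apply, homotopy_pointwise]
  by_cases hσ : σ.card = k
  · rw [euler (hH σ), ← Nat.cast_smul_eq_nsmul ℝ σ.card (ω σ), hσ, ← add_smul]
    congr 1
    push_cast
    ring
  · rw [h0 σ hσ]
    simp

lemma Hspace_eq_bot {r k : ℕ} (hk : n < k) : Hspace n r k = ⊥ := by
  rw [Hspace]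
  convert span_empty
  rw [Set.eq_empty_iff_forall_notMem]
  rintro ω ⟨α, σ, hσ, -, -⟩
  have := Finset.card_le_univ σ
  rw [Fintype.card_fin] at this
  omega

lemma ker_inf_H_succ {r k : ℕ} :
    LinearMap.ker (koszul n) ⊓ Hspace n (r + 1) k
      = Submodule.map (koszul n) (Hspace n r (k + 1)) := by
  apply le_antisymm
  · rintro ω ⟨hker, hH⟩
    have hκω : koszul n ω = 0 := LinearMap.mem_ker.mp hker
    have hhom := homotopy_H hH
    rw [hκω, map_zero, zero_add] at hhom
    set c : ℝ := ((r + 1 + k : ℕ) : ℝ) with hc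
    have hc0 : c ≠ 0 := by
      rw [hc]
      exact Nat.cast_ne_zero.mpr (by omega)
    refine ⟨c⁻¹ • extD n ω, ?_, ?_⟩
    · exact smul_mem _ _ (Hchar_le_Hspace n r (k + 1)
        (extD_mem_Hchar (Hspace_le_Hchar _ _ _ hH)))
    · rw [LinearMap.map_smul, hhom, smul_smul, inv_mul_cancel₀ hc0, one_smul]
  · rintro ω ⟨η, hη, rfl⟩
    refine ⟨LinearMap.mem_ker.mpr (koszul_koszul η), ?_⟩
    exact Hchar_le_Hspace _ _ _ (koszul_mem_Hchar (Hspace_le_Hchar _ _ _ hη))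

lemma ker_inf_H_zero {k : ℕ} (hk : 1 ≤ k) :
    LinearMap.ker (koszul n) ⊓ Hspace n 0 k = ⊥ := by
  rw [eq_bot_iff]
  rintro ω ⟨hker, hH⟩
  have hκω : koszul n ω = 0 := LinearMap.mem_ker.mp hker
  have hd : extD n ω = 0 := extD_eq_zero_of_H0 (Hspace_le_Hchar _ _ _ hH)
  have hhom := homotopy_H hH
  rw [hκω, hd, map_zero, map_zero, add_zero] at hhom
  have hc0 : ((0 + k : ℕ) : ℝ) ≠ 0 := Nat.cast_ne_zero.mpr (by omega)
  rw [Submodule.mem_bot]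
  calc ω = ((0 + k : ℕ) : ℝ)⁻¹ • (((0 + k : ℕ) : ℝ) • ω) := by
        rw [smul_smul, inv_mul_cancel₀ hc0, one_smul]
    _ = 0 := by rw [← hhom, smul_zero]

end PminusAux
namespace PminusAux
open Finset Submodule Module MvPolynomial

variable {n : ℕ}

lemma finrank_map_add_inf (f : PolyForm n →ₗ[ℝ] PolyForm n) (p : Submodule ℝ (PolyForm n))
    [FiniteDimensional ℝ ↥p] :
    finrank ℝ (p.map f) + finrank ℝ ↥(LinearMap.ker f ⊓ p) = finrank ℝ ↥p := by
  have h1 := LinearMap.finrank_range_add_finrank_ker (f.domRestrict p)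
  rw [LinearMap.range_domRestrict, LinearMap.ker_domRestrict] at h1
  have heq : Submodule.comap p.subtype (LinearMap.ker f ⊓ p)
      = Submodule.comap p.subtype (LinearMap.ker f) := by
    rw [Submodule.comap_inf, Submodule.comap_subtype_self, inf_top_eq]
  have h2 : finrank ℝ ↥(Submodule.comap p.subtype (LinearMap.ker f))
      = finrank ℝ ↥(LinearMap.ker f ⊓ p) := by
    rw [← heq]
    exact (Submodule.comapSubtypeEquivOfLe inf_le_right).finrank_eq
  rw [h2] at h1
  exact h1

/-- The closed form for `dim κ H_rΛ^k`. -/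
def F (n r k : ℕ) : ℕ :=
  if k ≤ n then (n + r).choose (n - k) * (r + k - 1).choose (k - 1) else 0

lemma F_zero (n k : ℕ) (hk : 1 ≤ k) : F n 0 k = n.choose k := by
  rw [F]
  by_cases h : k ≤ n
  · rw [if_pos h, show n + 0 = n from rfl, show 0 + k - 1 = k - 1 from by omega,
      Nat.choose_self, mul_one, Nat.choose_symm h]
  · rw [if_neg h, eq_comm, Nat.choose_eq_zero_of_lt (by omega)]

end PminusAux
namespace PminusAux
open Finset Submodule Module MvPolynomial

lemma choose_cast_eq (a b c : ℕ) (h : b ≤ a) (hc : a - b = c) :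
    ((a.choose b : ℚ)) = a.factorial / (b.factorial * c.factorial) := by
  rw [Nat.cast_choose ℚ h, hc]

lemma fact_nz (x : ℕ) : ((x.factorial : ℚ)) ≠ 0 :=
  Nat.cast_ne_zero.mpr (Nat.factorial_ne_zero x)

lemma I1' (K m r : ℕ) :
    (K+m+r+3).choose (m+1) * (K+r+1).choose K + (K+m+r+2).choose m * (K+r+1).choose (K+1)
      = (K+m+r+2).choose (r+1) * (K+m+2).choose (K+1) := by
  rw [← Nat.cast_inj (R := ℚ)]
  push_cast
  rw [choose_cast_eq (K+m+r+3) (m+1) (K+r+2) (by omega) (by omega),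
    choose_cast_eq (K+r+1) K (r+1) (by omega) (by omega),
    choose_cast_eq (K+m+r+2) m (K+r+2) (by omega) (by omega),
    choose_cast_eq (K+r+1) (K+1) r (by omega) (by omega),
    choose_cast_eq (K+m+r+2) (r+1) (K+m+1) (by omega) (by omega),
    choose_cast_eq (K+m+2) (K+1) (m+1) (by omega) (by omega)]
  rw [show K+m+r+3 = (K+m+r+2)+1 from by omega, Nat.factorial_succ (K+m+r+2),
    show K+r+2 = (K+r+1)+1 from by omega, Nat.factorial_succ (K+r+1),
    Nat.factorial_succ m, Nat.factorial_succ K, Nat.factorial_succ r,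
    show K+m+2 = (K+m+1)+1 from by omega, Nat.factorial_succ (K+m+1)]
  push_cast
  have h1 := fact_nz (K+m+r+2)
  have h2 := fact_nz (K+r+1)
  have h3 := fact_nz (K+m+1)
  have h4 := fact_nz K
  have h5 := fact_nz m
  have h6 := fact_nz r
  have g1 : ((K:ℚ)+m+r+2)+1 ≠ 0 := by positivity
  have g2 : ((K:ℚ)+r+1)+1 ≠ 0 := by positivity
  have g3 : ((m:ℚ))+1 ≠ 0 := by positivity
  have g4 : ((K:ℚ))+1 ≠ 0 := by positivity
  have g5 : ((r:ℚ))+1 ≠ 0 := by positivity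
  have g6 : ((K:ℚ)+m+1)+1 ≠ 0 := by positivity
  field_simp
  ring

lemma I2' (k m s : ℕ) :
    (k+m+s+1).choose (k+m+1) * (k+m+1).choose k + (k+m+s+1).choose m * (k+s).choose k
      = (k+m+s+2).choose (k+s+1) * (k+s).choose k := by
  rw [← Nat.cast_inj (R := ℚ)]
  push_cast
  rw [choose_cast_eq (k+m+s+1) (k+m+1) s (by omega) (by omega),
    choose_cast_eq (k+m+1) k (m+1) (by omega) (by omega),
    choose_cast_eq (k+m+s+1) m (k+s+1) (by omega) (by omega),
    choose_cast_eq (k+s) k s (by omega) (by omega),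
    choose_cast_eq (k+m+s+2) (k+s+1) (m+1) (by omega) (by omega)]
  rw [show k+m+s+2 = (k+m+s+1)+1 from by omega, Nat.factorial_succ (k+m+s+1),
    show k+s+1 = (k+s)+1 from by omega, Nat.factorial_succ (k+s),
    Nat.factorial_succ m]
  push_cast
  have h1 := fact_nz (k+m+s+1)
  have h2 := fact_nz (k+s)
  have h3 := fact_nz (k+m+1)
  have h4 := fact_nz k
  have h5 := fact_nz m
  have h6 := fact_nz s
  have g1 : ((k:ℚ)+m+s+1)+1 ≠ 0 := by positivity
  have g2 : ((k:ℚ)+s)+1 ≠ 0 := by positivity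
  have g3 : ((m:ℚ))+1 ≠ 0 := by positivity
  field_simp
  ring

lemma F_rec' (n r k : ℕ) (hk : 1 ≤ k) :
    F n (r + 1) k + F n r (k + 1) = (n + r).choose (r + 1) * n.choose k := by
  rcases lt_trichotomy n k with h | h | h
  · rw [F, if_neg (by omega), F, if_neg (by omega), Nat.choose_eq_zero_of_lt h, mul_zero]
    omega
  · subst h
    rw [F, if_pos (le_refl n), F, if_neg (by omega), Nat.sub_self, Nat.choose_zero_right,
      one_mul, Nat.choose_self, mul_one, add_zero,
      show r + 1 + n - 1 = n + r from by omega,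
      ← Nat.choose_symm (show r + 1 ≤ n + r from by omega),
      show n + r - (r + 1) = n - 1 from by omega]
  · obtain ⟨K, rfl⟩ : ∃ K, k = K + 1 := ⟨k - 1, by omega⟩
    obtain ⟨m, rfl⟩ : ∃ m, n = K + m + 2 := ⟨n - K - 2, by omega⟩
    rw [F, if_pos (by omega), F, if_pos (by omega)]
    rw [show K + m + 2 + (r + 1) = K+m+r+3 from by omega,
      show K + m + 2 - (K + 1) = m + 1 from by omega,
      show r + 1 + (K + 1) - 1 = K+r+1 from by omega,
      show K + 1 - 1 = K from by omega,
      show K + m + 2 + r = K+m+r+2 from by omega,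
      show K + m + 2 - (K + 1 + 1) = m from by omega,
      show r + (K + 1 + 1) - 1 = K+r+1 from by omega,
      show K + 1 + 1 - 1 = K + 1 from by omega]
    exact I1' K m r

lemma final_id (n s k : ℕ) :
    (n + s).choose n * n.choose k + F n s (k + 1)
      = (s + 1 + n).choose (s + 1 + k) * (s + k).choose k := by
  rcases lt_trichotomy n k with h | h | h
  · rw [Nat.choose_eq_zero_of_lt h, mul_zero, F, if_neg (by omega),
      Nat.choose_eq_zero_of_lt (show s + 1 + n < s + 1 + k from by omega), zero_mul]
    omega
  · subst h
    rw [F, if_neg (by omega), Nat.choose_self, mul_one, add_zero, Nat.choose_self, one_mul,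
      show n + s = s + n from by omega]
  · obtain ⟨m, rfl⟩ : ∃ m, n = k + m + 1 := ⟨n - k - 1, by omega⟩
    rw [F, if_pos (by omega)]
    rw [show k + m + 1 + s = k+m+s+1 from by omega,
      show k + m + 1 - (k + 1) = m from by omega,
      show s + (k + 1) - 1 = k+s from by omega,
      show k + 1 - 1 = k from by omega,
      show s + 1 + (k + m + 1) = k+m+s+2 from by omega,
      show s + 1 + k = k+s+1 from by omega,
      show s + k = k+s from by omega]
    exact I2' k m s

end PminusAux
namespace PminusAux
open Finset Submodule Module MvPolynomial

lemma D_eq (n : ℕ) : ∀ r k : ℕ, 1 ≤ k →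
    finrank ℝ (Submodule.map (koszul n) (Hspace n r k)) = F n r k := by
  intro r
  induction r with
  | zero =>
    intro k hk
    have h1 := finrank_map_add_inf (koszul n) (Hspace n 0 k)
    rw [ker_inf_H_zero hk, finrank_bot, add_zero, finrank_Hspace] at h1
    rw [F_zero n k hk, h1, Nat.choose_zero_right, one_mul]
  | succ r ih =>
    intro k hk
    have h1 := finrank_map_add_inf (koszul n) (Hspace n (r + 1) k)
    rw [ker_inf_H_succ, finrank_Hspace, ih (k + 1) (by omega),
      show n + (r + 1) - 1 = n + r from by omega] at h1
    have h2 := F_rec' n r k hk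
    omega

end PminusAux
open PminusAux in
/-- `dim P_r^-Λ^k(ℝ^n) = C(r+n, r+k) · C(r+k-1, k)`. -/
theorem dim_PminusSpace (n r k : ℕ) (hr : 1 ≤ r) :
    Module.finrank ℝ (PminusSpace n r k) =
      (r + n).choose (r + k) * (r + k - 1).choose k := by
  obtain ⟨s, rfl⟩ : ∃ s, r = s + 1 := ⟨r - 1, by omega⟩
  have hd : s + 1 - 1 = s := by omega
  unfold PminusSpace
  rw [hd]
  haveI : FiniteDimensional ℝ ↥(Submodule.map (koszul n) (Hspace n s (k + 1))) :=
    Module.Finite.map _ _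
  have hinf : Pspace n s k ⊓ Submodule.map (koszul n) (Hspace n s (k + 1)) = ⊥ := by
    rw [eq_bot_iff]
    rintro ω ⟨hP, hK⟩
    have h1 := Pspace_le_Pchar n s k hP
    obtain ⟨η, hη, rfl⟩ := hK
    have h2 := koszul_mem_Hchar (Hspace_le_Hchar n s (k + 1) hη)
    rw [Submodule.mem_bot]
    funext σ
    show koszul n η σ = 0
    by_contra hne
    have ht := (h2.2 σ).totalDegree hne
    have hle := h1.2 σ
    omega
  have hsum := Submodule.finrank_sup_add_finrank_inf_eq (Pspace n s k)
    (Submodule.map (koszul n) (Hspace n s (k + 1)))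
  rw [hinf, finrank_bot, add_zero] at hsum
  rw [hsum, finrank_Pspace, D_eq n s (k + 1) (by omega)]
  have hcs : (n + s).choose s = (n + s).choose n := by
    rw [← Nat.choose_symm (show s ≤ n + s from by omega),
      show n + s - s = n from by omega]
  rw [hcs, show s + 1 + k - 1 = s + k from by omega]
  exact final_id n s k
end
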